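/- In the 3-agent example A = {a1,a2,a3}, O = {o1,o2,∅} with q_{o1} = q_{o2} = 1, with a1's true preference r = (o1,∅,o2) and a2, a3 revealing β = (o1,o2,∅): if a1 reveals d = β (the ODS) and then refuses unacceptable assignments, the resulting post-refusal assignment g(f^U(d,β,β), r) — which gives a1 probabilities (1/3, 0, 2/3) on (o1,o2,∅) and a2, a3 probabilities (1/3,1/3,1/3) each — is wasteful: Σ_a g(...)_{a,o2} = 2/3 < 1 = q_{o2} while g(...)_{a2,∅} = 1/3 > 0 and a2 ranks o2 above ∅. -/

import Mathlib

open Finset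
open scoped Classical

variable {A O : Type*}

/-- A strict preference ranking: a bijection from object types to positions. -/
abbrev Pref (O : Type*) [Fintype O] := O ≃ Fin (Fintype.card O)

/-- The rank of object `o` under ranking `p` (1 = best). -/
def rk [Fintype O] (p : Pref O) (o : O) : ℕ := (p o : ℕ) + 1

/-- A (probabilistic) assignment. -/
def IsAssignment [Fintype A] [Fintype O] (q : O → ℕ) (x : A → O → ℝ) : Prop :=
  (∀ a o, 0 ≤ x a o ∧ x a o ≤ 1) ∧ (∀ a, ∑ o, x a o = 1) ∧ (∀ o, ∑ a, x a o ≤ (q o : ℝ))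

def IsDeterministic [Fintype A] [Fintype O] (x : A → O → ℝ) : Prop :=
  ∀ a o, x a o = 0 ∨ x a o = 1

/-- The rank value (sum of expected ranks). -/
def RV [Fintype A] [Fintype O] (p : A → Pref O) (x : A → O → ℝ) : ℝ :=
  ∑ a, ∑ o, (rk (p a) o : ℝ) * x a o

/-- `x` is a rank-minimizing assignment for profile `p`. -/
def RankMin [Fintype A] [Fintype O] (q : O → ℕ) (p : A → Pref O) (x : A → O → ℝ) : Prop :=
  IsAssignment q x ∧ ∀ y, IsAssignment q y → RV p x ≤ RV p y

/-- `x` is wasteful for profile `p`. -/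
def Wasteful [Fintype A] [Fintype O] (q : O → ℕ) (p : A → Pref O) (x : A → O → ℝ) : Prop :=
  ∃ o o' a, (∑ a', x a' o) < (q o : ℝ) ∧ 0 < x a o' ∧ rk (p a) o < rk (p a) o'

/-- `k̄(p_a)`: the minimal `k` such that the types ranked at or above `k` have
total capacity at least `|A|`. -/
noncomputable def kbar [Fintype O] (nA : ℕ) (q : O → ℕ) (p : Pref O) : ℕ :=
  sInf {k | nA ≤ ∑ o ∈ Finset.univ.filter (fun o => rk p o ≤ k), q o}

/-- A deterministic assignment, viewed as a map from agents to objects, is feasible. -/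
def DetOK [Fintype A] [Fintype O] (q : O → ℕ) (d : A → O) : Prop :=
  ∀ o, (Finset.univ.filter (fun a => d a = o)).card ≤ q o

/-- The 0-1 matrix of a deterministic assignment. -/
noncomputable def detMat [Fintype A] [Fintype O] (d : A → O) : A → O → ℝ :=
  fun a o => if d a = o then 1 else 0

/-- The set of deterministic rank-minimizing assignments for `p`
(minimizing over all probabilistic assignments). -/
noncomputable def Ystar [Fintype A] [Fintype O] (q : O → ℕ) (p : A → Pref O) :
    Finset (A → O) :=
  Finset.univ.filter
    (fun d => DetOK q d ∧ ∀ x, IsAssignment q x → RV p (detMat d) ≤ RV p x)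

/-- The uniform rank-minimizing mechanism. -/
noncomputable def fU [Fintype A] [Fintype O] (q : O → ℕ) (p : A → Pref O) : A → O → ℝ :=
  fun a o => (∑ d ∈ Ystar q p, detMat d a o) / (Ystar q p).card

/-- Agent `a` (with true ranking `r`) weakly prefers `x` to `x'`
(first-order stochastic dominance). -/
def WeakPrefAt [Fintype A] [Fintype O] (r : Pref O) (a : A) (x x' : A → O → ℝ) : Prop :=
  ∀ j : ℕ, ∑ o ∈ Finset.univ.filter (fun o => rk r o ≤ j), x' a o ≤
           ∑ o ∈ Finset.univ.filter (fun o => rk r o ≤ j), x a o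

/-- Agent `a` strictly prefers `x` to `x'`. -/
def StrictPrefAt [Fintype A] [Fintype O] (r : Pref O) (a : A) (x x' : A → O → ℝ) : Prop :=
  WeakPrefAt r a x x' ∧ ∃ j : ℕ, j < Fintype.card O ∧
    ∑ o ∈ Finset.univ.filter (fun o => rk r o ≤ j), x' a o <
    ∑ o ∈ Finset.univ.filter (fun o => rk r o ≤ j), x a o

/-- `d` is an outside option demotion strategy for true ranking `r`. -/
def ODS [Fintype O] (null : O) (r d : Pref O) : Prop :=
  (∀ o, rk r o < rk r null → rk d o = rk r o) ∧ rk d null = Fintype.card O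

/-- The refusal map `g`: each agent keeps probability on truly acceptable types
and moves all remaining mass to the null type. -/
noncomputable def refuse [Fintype A] [Fintype O] (null : O) (r : A → Pref O)
    (x : A → O → ℝ) : A → O → ℝ :=
  fun a o =>
    if rk (r a) o < rk (r a) null then x a o
    else if o = null then
      ∑ o' ∈ Finset.univ.filter (fun o' => rk (r a) null ≤ rk (r a) o'), x a o'
    else 0

/-- Equal treatment of equals for a mechanism. -/
def SatisfiesETE [Fintype A] [Fintype O] (q : O → ℕ)
    (f : (A → Pref O) → A → O → ℝ) : Prop :=
  ∀ (p : A → Pref O) (a a' : A),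
    (∀ o, rk (p a) o ≤ kbar (Fintype.card A) q (p a) → p a' o = p a o) →
    ∀ o, f p a o = f p a' o

/-- Coercion `Fin 3 ≃ Fin (Fintype.card (Fin 3))`. -/
def c3 : Fin 3 ≃ Fin (Fintype.card (Fin 3)) := finCongr (Fintype.card_fin 3).symm

/-- `β = (o1, o2, ∅)`. -/
def βp : Pref (Fin 3) := c3

/-- `r = (o1, ∅, o2)` (here `o1 = 0`, `o2 = 1`, `∅ = 2`). -/
def rp : Pref (Fin 3) := (Equiv.swap 1 2).trans c3


-- ===== auxiliary lemmas =====

lemma rkβ0 : rk βp 0 = 1 := by decide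
lemma rkβ1 : rk βp 1 = 2 := by decide
lemma rkβ2 : rk βp 2 = 3 := by decide
lemma rkr0 : rk rp 0 = 1 := by decide
lemma rkr1 : rk rp 1 = 3 := by decide
lemma rkr2 : rk rp 2 = 2 := by decide

lemma detMat_eq {A O : Type*} [Fintype A] [Fintype O] [DecidableEq O] (d : A → O) (a : A)
    (o : O) : detMat d a o = if d a = o then (1:ℝ) else 0 := by
  simp only [detMat]; by_cases h : d a = o <;> simp [h]

lemma rkβ_cast (o : Fin 3) : (rk βp o : ℝ) = (o : ℕ) + 1 := by
  fin_cases o <;> simp [rkβ0, rkβ1, rkβ2] <;> norm_num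

lemma RV_lb (q : Fin 3 → ℕ) (h0 : q 0 = 1) (h1 : q 1 = 1) {x : Fin 3 → Fin 3 → ℝ}
    (hx : IsAssignment q x) : (6:ℝ) ≤ RV (fun _ : Fin 3 => βp) x := by
  obtain ⟨hb, hr, hc⟩ := hx
  have r0 := hr 0; have r1 := hr 1; have r2 := hr 2
  have c0 := hc 0; have c1 := hc 1
  rw [h0] at c0; rw [h1] at c1
  have n0 := (hb 0 2).1; have n1 := (hb 1 2).1; have n2 := (hb 2 2).1
  simp only [RV, Fin.sum_univ_three, rkβ0, rkβ1, rkβ2] at r0 r1 r2 c0 c1 ⊢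
  push_cast at c0 c1 ⊢
  nlinarith [r0, r1, r2, c0, c1, n0, n1, n2]

lemma RV_det (d : Fin 3 → Fin 3) :
    RV (fun _ : Fin 3 => βp) (detMat d)
      = (((d 0 : ℕ) : ℝ) + ((d 1 : ℕ) : ℝ) + ((d 2 : ℕ) : ℝ)) + 3 := by
  have key : ∀ a : Fin 3, ∑ o, (rk βp o : ℝ) * detMat d a o = ((d a : ℕ) : ℝ) + 1 := by
    intro a
    have h1 : ∑ o, (rk βp o : ℝ) * detMat d a o
        = ∑ o, (if d a = o then (rk βp o : ℝ) else 0) := by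
      refine Finset.sum_congr rfl fun o _ => ?_
      rw [detMat_eq]; split <;> simp
    rw [h1, Finset.sum_ite_eq]
    simp [rkβ_cast]
  simp only [RV, Fin.sum_univ_three, key]
  ring

lemma id_assign (q : Fin 3 → ℕ) (h0 : q 0 = 1) (h1 : q 1 = 1) (h2 : 3 ≤ q 2) :
    IsAssignment q (detMat (id : Fin 3 → Fin 3)) := by
  refine ⟨fun a o => ?_, fun a => ?_, fun o => ?_⟩
  · rw [detMat_eq]; split <;> norm_num
  · fin_cases a <;> simp [detMat_eq, Fin.sum_univ_three]
  · fin_cases o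
    · simp [detMat_eq, Fin.sum_univ_three, h0]
    · simp [detMat_eq, Fin.sum_univ_three, h1]
    · simp only [detMat_eq, Fin.sum_univ_three]
      norm_num
      exact_mod_cast le_trans (by norm_num : (1:ℕ) ≤ 3) h2

lemma ystar_eq (q : Fin 3 → ℕ) (h0 : q 0 = 1) (h1 : q 1 = 1) (h2 : 3 ≤ q 2) :
    Ystar q (fun _ : Fin 3 => βp)
      = Finset.univ.filter (fun d : Fin 3 → Fin 3 => d 0 ≠ d 1 ∧ d 0 ≠ d 2 ∧ d 1 ≠ d 2) := by
  ext d
  simp only [Ystar, Finset.mem_filter, Finset.mem_univ, true_and]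
  constructor
  · rintro ⟨hok, hmin⟩
    have h6 : RV (fun _ : Fin 3 => βp) (detMat d) ≤ 6 := by
      calc RV (fun _ : Fin 3 => βp) (detMat d) ≤ _ := hmin _ (id_assign q h0 h1 h2)
        _ = 6 := by rw [RV_det]; norm_num
    rw [RV_det] at h6
    have hsum : (d 0 : ℕ) + (d 1 : ℕ) + (d 2 : ℕ) ≤ 3 := by
      have h3 : ((d 0 : ℕ) : ℝ) + ((d 1 : ℕ) : ℝ) + ((d 2 : ℕ) : ℝ) ≤ 3 := by linarith
      exact_mod_cast h3
    have hc0 : (Finset.univ.filter (fun a : Fin 3 => d a = 0)).card ≤ 1 := by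
      have h := hok 0; rw [h0] at h; convert h using 3
    have hc1 : (Finset.univ.filter (fun a : Fin 3 => d a = 1)).card ≤ 1 := by
      have h := hok 1; rw [h1] at h; convert h using 3
    clear hok hmin h6
    revert hc0 hc1 hsum
    revert d
    decide
  · rintro hP
    have hcard : ∀ d : Fin 3 → Fin 3, (d 0 ≠ d 1 ∧ d 0 ≠ d 2 ∧ d 1 ≠ d 2) →
        ∀ o : Fin 3, (Finset.univ.filter (fun a => d a = o)).card ≤ 1 := by decide
    have hsum : (d 0 : ℕ) + (d 1 : ℕ) + (d 2 : ℕ) = 3 := by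
      revert hP; revert d; decide
    refine ⟨fun o => ?_, fun x hx => ?_⟩
    · have hq : 1 ≤ q o := by
        fin_cases o
        · exact h0.ge
        · exact h1.ge
        · exact le_trans (by norm_num) h2
      have key := le_trans (hcard d hP o) hq
      convert key using 3
      rfl
    · have h3 : ((d 0 : ℕ) : ℝ) + ((d 1 : ℕ) : ℝ) + ((d 2 : ℕ) : ℝ) = 3 := by
        exact_mod_cast hsum
      calc RV (fun _ : Fin 3 => βp) (detMat d) = 6 := by rw [RV_det, h3]; norm_num
        _ ≤ RV (fun _ : Fin 3 => βp) x := RV_lb q h0 h1 hx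

lemma fU_val (q : Fin 3 → ℕ) (h0 : q 0 = 1) (h1 : q 1 = 1) (h2 : 3 ≤ q 2) :
    ∀ a o : Fin 3, fU q (fun _ : Fin 3 => βp) a o = 1 / 3 := by
  intro a o
  have hcard : (Finset.univ.filter
      (fun d : Fin 3 → Fin 3 => d 0 ≠ d 1 ∧ d 0 ≠ d 2 ∧ d 1 ≠ d 2)).card = 6 := by decide
  have hfc : ∀ a o : Fin 3, ((Finset.univ.filter
      (fun d : Fin 3 → Fin 3 => d 0 ≠ d 1 ∧ d 0 ≠ d 2 ∧ d 1 ≠ d 2)).filter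
      (fun d => d a = o)).card = 2 := by decide
  rw [fU, ystar_eq q h0 h1 h2, hcard]
  have hsum : ∑ d ∈ Finset.univ.filter
      (fun d : Fin 3 → Fin 3 => d 0 ≠ d 1 ∧ d 0 ≠ d 2 ∧ d 1 ≠ d 2), detMat d a o
      = (2 : ℝ) := by
    have hb : ∑ d ∈ Finset.univ.filter
        (fun d : Fin 3 → Fin 3 => d 0 ≠ d 1 ∧ d 0 ≠ d 2 ∧ d 1 ≠ d 2), detMat d a o
        = (((Finset.univ.filter
        (fun d : Fin 3 → Fin 3 => d 0 ≠ d 1 ∧ d 0 ≠ d 2 ∧ d 1 ≠ d 2)).filter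
        (fun d => d a = o)).card : ℝ) := by
      rw [← Finset.sum_boole]
      exact Finset.sum_congr rfl fun y _ => by rw [detMat_eq]
    rw [hb, hfc a o]; norm_num
  rw [hsum]
  norm_num

/-- in the 3-agent example, when `a1` (true preference `r`) reveals the
ODS `β` and the others truthfully reveal `β`, the post-refusal assignment gives `a1`
`(1/3, 0, 2/3)` and the others `(1/3, 1/3, 1/3)`, and it is wasteful: `o2` is
undersubscribed while `a2` holds probability on `∅` and prefers `o2` to `∅`. -/
theorem stmt16 (q : Fin 3 → ℕ) (h0 : q 0 = 1) (h1 : q 1 = 1) (h2 : 3 ≤ q 2) :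
    (refuse 2 (fun i : Fin 3 => if i = 0 then rp else βp) (fU q (fun _ : Fin 3 => βp)) 0 0
        = 1 / 3 ∧
     refuse 2 (fun i : Fin 3 => if i = 0 then rp else βp) (fU q (fun _ : Fin 3 => βp)) 0 1
        = 0 ∧
     refuse 2 (fun i : Fin 3 => if i = 0 then rp else βp) (fU q (fun _ : Fin 3 => βp)) 0 2
        = 2 / 3) ∧
    (∀ a : Fin 3, a ≠ 0 → ∀ o : Fin 3,
      refuse 2 (fun i : Fin 3 => if i = 0 then rp else βp) (fU q (fun _ : Fin 3 => βp)) a o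
        = 1 / 3) ∧
    (∑ a : Fin 3,
      refuse 2 (fun i : Fin 3 => if i = 0 then rp else βp) (fU q (fun _ : Fin 3 => βp)) a 1
        = 2 / 3) ∧
    Wasteful q (fun i : Fin 3 => if i = 0 then rp else βp)
      (refuse 2 (fun i : Fin 3 => if i = 0 then rp else βp)
        (fU q (fun _ : Fin 3 => βp))) := by
  have hx := fU_val q h0 h1 h2
  have hcr : (Finset.univ.filter (fun o' : Fin 3 => 2 ≤ rk rp o')).card = 2 := by decide
  have hcb : (Finset.univ.filter (fun o' : Fin 3 => 3 ≤ rk βp o')).card = 1 := by decide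
  have e00 : refuse 2 (fun i : Fin 3 => if i = 0 then rp else βp)
      (fU q (fun _ : Fin 3 => βp)) 0 0 = 1 / 3 := by
    simp [refuse, rkr0, rkr1, rkr2, hx]
  have e01 : refuse 2 (fun i : Fin 3 => if i = 0 then rp else βp)
      (fU q (fun _ : Fin 3 => βp)) 0 1 = 0 := by
    simp [refuse, rkr0, rkr1, rkr2, hx]
  have e02 : refuse 2 (fun i : Fin 3 => if i = 0 then rp else βp)
      (fU q (fun _ : Fin 3 => βp)) 0 2 = 2 / 3 := by
    simp [refuse, rkr0, rkr1, rkr2, hx, hcr]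
    norm_num
  have eo : ∀ a : Fin 3, a ≠ 0 → ∀ o : Fin 3,
      refuse 2 (fun i : Fin 3 => if i = 0 then rp else βp)
        (fU q (fun _ : Fin 3 => βp)) a o = 1 / 3 := by
    intro a ha o
    fin_cases a
    · exact absurd rfl ha
    · fin_cases o <;>
        simp [refuse, rkβ0, rkβ1, rkβ2, hx, hcb]
    · fin_cases o <;>
        simp [refuse, rkβ0, rkβ1, rkβ2, hx, hcb]
  have esum : ∑ a : Fin 3,
      refuse 2 (fun i : Fin 3 => if i = 0 then rp else βp)
        (fU q (fun _ : Fin 3 => βp)) a 1 = 2 / 3 := by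
    rw [Fin.sum_univ_three, e01, eo 1 (by decide) 1, eo 2 (by decide) 1]
    norm_num
  refine ⟨⟨e00, e01, e02⟩, eo, esum, 1, 2, 1, ?_, ?_, ?_⟩
  · rw [esum, h1]; norm_num
  · rw [eo 1 (by decide) 2]; norm_num
  · simp [rkβ1, rkβ2]
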